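/- arXiv:0905.2773 — 2 statements merged into one kernel-verified Lean document; each statement's English description precedes it below -/
import Mathlib

section
/- Let D be a bounded domain with C² boundary in a Riemannian manifold M, u, h ∈ C¹(D̄) with u ∈ C², h ∈ C², and λ ∈ ℝ. Then ∫_D (‖∇u‖² − λu²) Δh − 2∫_D Hess h(∇u, ∇u) − 2∫_D (Δu + λu)⟨∇h, ∇u⟩ = ∫_{∂D} (‖∇u‖² − λu²) ∂h/∂n − 2∫_{∂D} ⟨∇h, ∇u⟩ ∂u/∂n. -/
open MeasureTheory

noncomputable abbrev Euc (n : ℕ) := EuclideanSpace ℝ (Fin n)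

/-- Divergence of a vector field on `ℝⁿ`: `div X = ∑ᵢ ⟨DX(eᵢ), eᵢ⟩`. -/
noncomputable def ediv {n : ℕ} (X : Euc n → Euc n) (x : Euc n) : ℝ :=
  ∑ i, (inner ℝ (fderiv ℝ X x (EuclideanSpace.single i 1)) (EuclideanSpace.single i 1) : ℝ)

/-- Laplace–Beltrami operator (Euclidean): `Δu = div ∇u`. -/
noncomputable def lap {n : ℕ} (u : Euc n → ℝ) (x : Euc n) : ℝ :=
  ediv (fun y => gradient u y) x

/-- Hessian quadratic form: `Hess u (v,v) = ⟨D(∇u)(v), v⟩`. -/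
noncomputable def hessQ {n : ℕ} (u : Euc n → ℝ) (x v : Euc n) : ℝ :=
  (inner ℝ (fderiv ℝ (fun y => gradient u y) x v) v : ℝ)

section aux

variable {n : ℕ}

lemma grad_contDiff {u : Euc n → ℝ} (hu : ContDiff ℝ 2 u) :
    ContDiff ℝ 1 (fun x => gradient u x) := by
  have : (fun x => gradient u x)
      = fun x => (InnerProductSpace.toDual ℝ (Euc n)).symm (fderiv ℝ u x) := rfl
  rw [this]
  exact ((InnerProductSpace.toDual ℝ (Euc n)).symm.contDiff).comp
    (hu.fderiv_right (le_refl 2))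

lemma inner_grad {u : Euc n → ℝ} (x v : Euc n) :
    (inner ℝ (gradient u x) v : ℝ) = fderiv ℝ u x v :=
  InnerProductSpace.toDual_symm_apply

lemma inner_fderiv_grad {u : Euc n → ℝ} (hu : ContDiff ℝ 2 u) (x v w : Euc n) :
    (inner ℝ (fderiv ℝ (fun y => gradient u y) x v) w : ℝ) = fderiv ℝ (fderiv ℝ u) x v w := by
  have hdf : DifferentiableAt ℝ (fderiv ℝ u) x :=
    ((hu.fderiv_right (le_refl 2)).differentiable one_ne_zero).differentiableAt
  have h1 : (fun y => gradient u y)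
      = ((InnerProductSpace.toDual ℝ (Euc n)).symm : _ → Euc n) ∘ (fderiv ℝ u) := rfl
  rw [h1, fderiv_comp x ((InnerProductSpace.toDual ℝ (Euc n)).symm.differentiableAt) hdf]
  simp only [LinearIsometryEquiv.fderiv, ContinuousLinearMap.coe_comp', Function.comp_apply,
    LinearIsometryEquiv.coe_coe]
  exact InnerProductSpace.toDual_symm_apply

lemma hess_symm {u : Euc n → ℝ} (hu : ContDiff ℝ 2 u) (x v w : Euc n) :
    (inner ℝ (fderiv ℝ (fun y => gradient u y) x v) w : ℝ)
      = (inner ℝ (fderiv ℝ (fun y => gradient u y) x w) v : ℝ) := by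
  rw [inner_fderiv_grad hu, inner_fderiv_grad hu,
    (hu.contDiffAt.isSymmSndFDerivAt (by simp)).eq]

lemma ediv_smul {f : Euc n → ℝ} {X : Euc n → Euc n} {x : Euc n}
    (hf : DifferentiableAt ℝ f x) (hX : DifferentiableAt ℝ X x) :
    ediv (fun y => f y • X y) x = f x * ediv X x + fderiv ℝ f x (X x) := by
  unfold ediv
  have key : ∀ i : Fin n, fderiv ℝ (fun y => f y • X y) x (EuclideanSpace.single i 1)
      = f x • fderiv ℝ X x (EuclideanSpace.single i 1)
        + (fderiv ℝ f x (EuclideanSpace.single i 1)) • X x := by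
    intro i; rw [fderiv_fun_smul hf hX]; simp
  simp only [key, inner_add_left, real_inner_smul_left]
  rw [Finset.sum_add_distrib, Finset.mul_sum]
  congr 1
  have hrepr := (EuclideanSpace.basisFun (Fin n) ℝ).sum_repr' (X x)
  conv_rhs => rw [← hrepr]
  rw [map_sum]
  refine Finset.sum_congr rfl fun i _ => ?_
  rw [_root_.map_smul, smul_eq_mul]
  simp [EuclideanSpace.basisFun_apply, real_inner_comm, mul_comm]

lemma ediv_continuous {X : Euc n → Euc n} (hX : ContDiff ℝ 1 X) :
    Continuous (fun x => ediv X x) := by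
  unfold ediv
  refine continuous_finset_sum _ fun i _ => ?_
  exact ((hX.continuous_fderiv one_ne_zero).clm_apply continuous_const).inner continuous_const

end aux

/-- The Escobar–Freire integral identity on a bounded domain `D` with `C²` boundary
(here in the Riemannian manifold `ℝⁿ`): assuming the divergence theorem for `D` with
boundary measure `σ` and outward unit normal `N`, for `u, h ∈ C²(D̄)` and `λ ∈ ℝ`,
`∫_D (‖∇u‖²−λu²)Δh − 2∫_D Hess h(∇u,∇u) − 2∫_D (Δu+λu)⟨∇h,∇u⟩
  = ∫_{∂D} (‖∇u‖²−λu²)∂h/∂n − 2∫_{∂D} ⟨∇h,∇u⟩ ∂u/∂n`. -/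
theorem stmt_14 (n : ℕ) (D : Set (Euc n)) (hD : IsOpen D)
    (hDb : Bornology.IsBounded D)
    (σ : Measure (Euc n)) (N : Euc n → Euc n)
    (hN : ∀ x ∈ frontier D, ‖N x‖ = 1)
    (hdiv : ∀ X : Euc n → Euc n, ContDiff ℝ 1 X →
      ∫ x in D, ediv X x = ∫ x in frontier D, (inner ℝ (X x) (N x) : ℝ) ∂σ)
    (u h : Euc n → ℝ) (hu : ContDiff ℝ 2 u) (hh : ContDiff ℝ 2 h) (lam : ℝ) :
    ((∫ x in D, (‖gradient u x‖ ^ 2 - lam * u x ^ 2) * lap h x)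
        - 2 * ∫ x in D, hessQ h x (gradient u x))
        - 2 * ∫ x in D, (lap u x + lam * u x) * (inner ℝ (gradient h x) (gradient u x) : ℝ)
      = (∫ x in frontier D,
            (‖gradient u x‖ ^ 2 - lam * u x ^ 2) * (inner ℝ (gradient h x) (N x) : ℝ) ∂σ)
        - 2 * ∫ x in frontier D,
            (inner ℝ (gradient h x) (gradient u x) : ℝ) * (inner ℝ (gradient u x) (N x) : ℝ) ∂σ := by
  classical
  set Gu : Euc n → Euc n := fun x => gradient u x with hGu_def
  set Gh : Euc n → Euc n := fun x => gradient h x with hGh_def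
  have hGu : ContDiff ℝ 1 Gu := grad_contDiff hu
  have hGh : ContDiff ℝ 1 Gh := grad_contDiff hh
  -- scalar functions
  set f : Euc n → ℝ := fun x => ‖Gu x‖ ^ 2 - lam * u x ^ 2 with hf_def
  set g : Euc n → ℝ := fun x => (inner ℝ (Gh x) (Gu x) : ℝ) with hg_def
  have hf : ContDiff ℝ 1 f := by
    have h1 : ContDiff ℝ 1 fun x => (inner ℝ (Gu x) (Gu x) : ℝ) := hGu.inner ℝ hGu
    have h2 : ContDiff ℝ 1 fun x => lam * u x ^ 2 :=
      contDiff_const.mul ((hu.of_le (by norm_num)).pow 2)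
    have : f = fun x => (inner ℝ (Gu x) (Gu x) : ℝ) - lam * u x ^ 2 := by
      funext x; simp only [hf_def, real_inner_self_eq_norm_sq]
    rw [this]; exact h1.sub h2
  have hg : ContDiff ℝ 1 g := hGh.inner ℝ hGu
  set X1 : Euc n → Euc n := fun x => f x • Gh x with hX1_def
  set X2 : Euc n → Euc n := fun x => g x • Gu x with hX2_def
  have hX1 : ContDiff ℝ 1 X1 := hf.smul hGh
  have hX2 : ContDiff ℝ 1 X2 := hg.smul hGu
  -- pointwise divergence identities
  have hdu : Differentiable ℝ u := hu.differentiable (by norm_num)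
  have hdGu : Differentiable ℝ Gu := hGu.differentiable one_ne_zero
  have hdGh : Differentiable ℝ Gh := hGh.differentiable one_ne_zero
  have hdf : Differentiable ℝ f := hf.differentiable one_ne_zero
  have hdg : Differentiable ℝ g := hg.differentiable one_ne_zero
  have key : ∀ x, ediv X1 x - 2 * ediv X2 x
      = f x * lap h x - 2 * hessQ h x (Gu x) - 2 * (lap u x + lam * u x) * g x := by
    intro x
    have e1 : ediv X1 x = f x * ediv Gh x + fderiv ℝ f x (Gh x) :=
      ediv_smul (hdf x) (hdGh x)
    have e2 : ediv X2 x = g x * ediv Gu x + fderiv ℝ g x (Gu x) :=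
      ediv_smul (hdg x) (hdGu x)
    -- compute fderiv f x (Gh x)
    have hfe : f = fun y => (inner ℝ (Gu y) (Gu y) : ℝ) - lam * (u y * u y) := by
      funext y; simp only [hf_def, real_inner_self_eq_norm_sq, pow_two]
    have df1 : fderiv ℝ f x (Gh x)
        = 2 * (inner ℝ (fderiv ℝ Gu x (Gh x)) (Gu x) : ℝ)
          - 2 * lam * u x * (inner ℝ (Gu x) (Gh x) : ℝ) := by
      rw [hfe]
      have d1 : DifferentiableAt ℝ (fun y => (inner ℝ (Gu y) (Gu y) : ℝ)) x :=
        ((hdGu x).inner ℝ (hdGu x))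
      have d2 : DifferentiableAt ℝ (fun y => lam * (u y * u y)) x :=
        (differentiableAt_const lam).mul ((hdu x).mul (hdu x))
      rw [fderiv_fun_sub d1 d2]
      simp only [ContinuousLinearMap.coe_sub', Pi.sub_apply]
      rw [fderiv_inner_apply ℝ (hdGu x) (hdGu x)]
      rw [fderiv_const_mul (a := fun y => u y * u y) ((hdu x).mul (hdu x)), fderiv_fun_mul (hdu x) (hdu x)]
      have hgrad : fderiv ℝ u x (Gh x) = (inner ℝ (Gu x) (Gh x) : ℝ) :=
        (inner_grad x (Gh x)).symm
      simp only [ContinuousLinearMap.smul_apply, ContinuousLinearMap.add_apply, smul_eq_mul]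
      rw [real_inner_comm (Gu x) (fderiv ℝ Gu x (Gh x)), hgrad]
      ring
    -- compute fderiv g x (Gu x)
    have dg1 : fderiv ℝ g x (Gu x)
        = (inner ℝ (Gh x) (fderiv ℝ Gu x (Gu x)) : ℝ)
          + (inner ℝ (fderiv ℝ Gh x (Gu x)) (Gu x) : ℝ) := by
      rw [hg_def]
      exact fderiv_inner_apply ℝ (hdGh x) (hdGu x) (Gu x)
    -- symmetry of Hess u
    have hsymu : (inner ℝ (Gh x) (fderiv ℝ Gu x (Gu x)) : ℝ)
        = (inner ℝ (fderiv ℝ Gu x (Gh x)) (Gu x) : ℝ) := by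
      rw [real_inner_comm]
      exact hess_symm hu x (Gu x) (Gh x)
    have hlaph : ediv Gh x = lap h x := rfl
    have hlapu : ediv Gu x = lap u x := rfl
    have hhq : (inner ℝ (fderiv ℝ Gh x (Gu x)) (Gu x) : ℝ) = hessQ h x (Gu x) := rfl
    have hgsym : (inner ℝ (Gu x) (Gh x) : ℝ) = g x := real_inner_comm _ _
    rw [e1, e2, df1, dg1, hsymu, hlaph, hlapu, hhq, hgsym]
    ring
  -- integrability on D
  have hK : IsCompact (closure D) := hDb.isCompact_closure
  have integrableOf : ∀ F : Euc n → ℝ, Continuous F → IntegrableOn F D := by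
    intro F hF
    exact (hF.continuousOn.integrableOn_compact hK).mono_set subset_closure
  have claph : Continuous (lap h) := ediv_continuous hGh
  have clapu : Continuous (lap u) := ediv_continuous hGu
  have cGu : Continuous Gu := hGu.continuous
  have cGh : Continuous Gh := hGh.continuous
  have cf : Continuous f := hf.continuous
  have cg : Continuous g := hg.continuous
  have chq : Continuous (fun x => hessQ h x (Gu x)) := by
    have : Continuous fun x => fderiv ℝ Gh x (Gu x) :=
      (hGh.continuous_fderiv one_ne_zero).clm_apply cGu
    exact this.inner cGu
  have i1 : IntegrableOn (fun x => f x * lap h x) D := integrableOf _ (cf.mul claph)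
  have i2 : IntegrableOn (fun x => hessQ h x (Gu x)) D := integrableOf _ chq
  have i3 : IntegrableOn (fun x => (lap u x + lam * u x) * g x) D :=
    integrableOf _ ((clapu.add (continuous_const.mul (hu.continuous))).mul cg)
  have iX1 : IntegrableOn (fun x => ediv X1 x) D := integrableOf _ (ediv_continuous hX1)
  have iX2 : IntegrableOn (fun x => ediv X2 x) D := integrableOf _ (ediv_continuous hX2)
  -- combine interior integrals
  have i12 : IntegrableOn (fun x => f x * lap h x - 2 * hessQ h x (Gu x)) D :=
    i1.sub (i2.const_mul 2)
  have lhs_eq : ((∫ x in D, f x * lap h x)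
        - 2 * ∫ x in D, hessQ h x (Gu x))
        - 2 * ∫ x in D, (lap u x + lam * u x) * g x
      = (∫ x in D, ediv X1 x) - 2 * ∫ x in D, ediv X2 x := by
    have eL : ∫ x in D, (ediv X1 x - 2 * ediv X2 x)
        = (∫ x in D, ediv X1 x) - 2 * ∫ x in D, ediv X2 x := by
      rw [integral_sub iX1 (iX2.const_mul 2), integral_const_mul]
    have eR : ∫ x in D, (f x * lap h x - 2 * hessQ h x (Gu x)
          - 2 * ((lap u x + lam * u x) * g x))
        = ((∫ x in D, f x * lap h x) - 2 * ∫ x in D, hessQ h x (Gu x))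
          - 2 * ∫ x in D, (lap u x + lam * u x) * g x := by
      rw [integral_sub i12 (i3.const_mul 2), integral_sub i1 (i2.const_mul 2),
        integral_const_mul, integral_const_mul]
    rw [← eR, ← eL]
    refine integral_congr_ae (Filter.Eventually.of_forall fun x => ?_)
    dsimp only
    rw [key x]; ring
  -- boundary
  have b1 : ∫ x in D, ediv X1 x
      = ∫ x in frontier D, f x * (inner ℝ (Gh x) (N x) : ℝ) ∂σ := by
    rw [hdiv X1 hX1]
    refine integral_congr_ae (Filter.Eventually.of_forall fun x => ?_)
    simp [hX1_def, real_inner_smul_left, Finset.mul_sum, mul_assoc]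
  have b2 : ∫ x in D, ediv X2 x
      = ∫ x in frontier D, g x * (inner ℝ (Gu x) (N x) : ℝ) ∂σ := by
    rw [hdiv X2 hX2]
    refine integral_congr_ae (Filter.Eventually.of_forall fun x => ?_)
    simp [hX2_def, real_inner_smul_left, Finset.mul_sum, mul_assoc]
  calc ((∫ x in D, f x * lap h x) - 2 * ∫ x in D, hessQ h x (Gu x))
        - 2 * ∫ x in D, (lap u x + lam * u x) * g x
      = (∫ x in D, ediv X1 x) - 2 * ∫ x in D, ediv X2 x := lhs_eq
    _ = (∫ x in frontier D, f x * (inner ℝ (Gh x) (N x) : ℝ) ∂σ)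
        - 2 * ∫ x in frontier D, g x * (inner ℝ (Gu x) (N x) : ℝ) ∂σ := by rw [b1, b2]
end

section
/- Let f : ℝⁿ → ℝ be C¹ and fix p ∈ ℝⁿ and a unit vector p₀ ∈ ℝⁿ. Suppose γ(t) = f(t p₀ + p) has derivative γ'(t) converging to a finite limit as t → ∞. Then along the curve t ↦ (t p₀ + p, γ(t)) in the graph Γ_f, the quantity ⟨∇̃r̃, ν⟩ tends to 0 as t → ∞, where r̃ is the extrinsic distance to (p, f(p)) and ν the unit normal of the graph. -/
open Filter

lemma aux_div (γ : ℝ → ℝ) (hγ : Differentiable ℝ γ) (L : ℝ)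
    (hd : Tendsto (deriv γ) atTop (nhds L)) :
    Tendsto (fun t => γ t / t) atTop (nhds L) := by
  rw [Metric.tendsto_nhds]
  intro ε hε
  have h2 : ∀ᶠ s in atTop, |deriv γ s - L| < ε / 4 := by
    have := Metric.tendsto_nhds.mp hd (ε / 4) (by linarith)
    simpa [Real.dist_eq] using this
  obtain ⟨T', hT'⟩ := eventually_atTop.mp h2
  set T : ℝ := max T' 0 with hTdef
  have hT : ∀ s ≥ T, |deriv γ s - L| < ε / 4 :=
    fun s hs => hT' s (le_trans (le_max_left _ _) hs)
  have hT0 : 0 ≤ T := le_max_right _ _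
  set h : ℝ → ℝ := fun s => γ s - L * s with hh
  have hder : ∀ s, HasDerivAt h (deriv γ s - L) s := by
    intro s
    exact ((hγ s).hasDerivAt.sub ((hasDerivAt_id s).const_mul L)).congr_deriv (by ring)
  have hmvt : ∀ t ≥ T, |h t - h T| ≤ ε / 4 * |t - T| := by
    intro t ht
    have := Convex.norm_image_sub_le_of_norm_deriv_le (s := Set.Ici T) (f := h) (C := ε / 4)
      (fun x _ => ((hder x).differentiableAt))
      (fun x hx => by
        rw [(hder x).deriv]
        exact le_of_lt (by simpa using hT x hx))
      (convex_Ici T) Set.self_mem_Ici ht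
    simpa [Real.norm_eq_abs] using this
  filter_upwards [eventually_ge_atTop (max T 1), eventually_ge_atTop (4 * |h T| / ε + 1)]
    with t ht1 ht2
  have htT : t ≥ T := le_trans (le_max_left _ _) ht1
  have ht0 : (1:ℝ) ≤ t := le_trans (le_max_right _ _) ht1
  have htpos : (0:ℝ) < t := by linarith
  have key := hmvt t htT
  rw [abs_of_nonneg (by linarith : (0:ℝ) ≤ t - T)] at key
  have hht : |h t| ≤ |h T| + ε / 4 * (t - T) := by
    have := abs_sub_abs_le_abs_sub (h t) (h T)
    linarith
  have h4 : 4 * |h T| < t * ε := by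
    rw [← div_lt_iff₀ hε]; linarith
  have hcT : |h T| / t < ε / 2 := by
    rw [div_lt_iff₀ htpos]
    nlinarith [mul_pos hε htpos]
  have hrw : γ t / t - L = h t / t := by
    have h1 : h t = γ t - L * t := rfl
    field_simp [h1]
    ring
  rw [Real.dist_eq, hrw, abs_div, abs_of_pos htpos]
  calc |h t| / t ≤ (|h T| + ε / 4 * (t - T)) / t :=
        div_le_div_of_nonneg_right hht htpos.le |>.trans_eq rfl
    _ = |h T| / t + ε / 4 * (t - T) / t := by rw [add_div]
    _ < ε / 2 + ε / 4 * (t - T) / t := by linarith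
    _ ≤ ε / 2 + ε / 4 := by
        have : ε / 4 * (t - T) / t ≤ ε / 4 := by
          rw [div_le_iff₀ htpos]
          nlinarith
        linarith
    _ < ε := by linarith

/-- Along a straight-line direction `p₀` (a unit vector) in which `γ(t) = f(tp₀+p)`
has derivative converging to a finite limit, the normal component `⟨∇̃r̃, ν⟩` of the
ambient gradient of the extrinsic distance `r̃` (to `(p, f p)`) on the graph `Γ_f`
tends to `0` as `t → ∞`. -/
theorem stmt_17 (n : ℕ) (f : Euc n → ℝ) (hf : Differentiable ℝ f)
    (p p₀ : Euc n) (hp₀ : ‖p₀‖ = 1) (L : ℝ)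
    (hd : Tendsto (deriv fun t : ℝ => f (t • p₀ + p)) atTop (nhds L)) :
    Tendsto (fun t : ℝ =>
        (inner ℝ
          ((1 / ‖(WithLp.equiv 2 (Euc n × ℝ)).symm
              (t • p₀ + p - p, f (t • p₀ + p) - f p)‖) •
            (WithLp.equiv 2 (Euc n × ℝ)).symm (t • p₀ + p - p, f (t • p₀ + p) - f p))
          ((1 / Real.sqrt (1 + ‖gradient f (t • p₀ + p)‖ ^ 2)) •
            (WithLp.equiv 2 (Euc n × ℝ)).symm (-gradient f (t • p₀ + p), 1)) : ℝ))
      atTop (nhds 0) := by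
  classical
  set G : ℝ → Euc n := fun t => gradient f (t • p₀ + p) with hG
  set γ : ℝ → ℝ := fun t => f (t • p₀ + p) with hγdef
  set g : ℝ → ℝ := fun t => (inner ℝ (G t) p₀ : ℝ) with hg
  set v : ℝ → WithLp 2 (Euc n × ℝ) := fun t =>
    (WithLp.equiv 2 (Euc n × ℝ)).symm (t • p₀ + p - p, γ t - f p) with hv
  have hline : ∀ t : ℝ, HasDerivAt (fun s : ℝ => s • p₀ + p) p₀ t := by
    intro t
    simpa using ((hasDerivAt_id t).smul_const p₀).add_const p
  have hγ' : ∀ t, HasDerivAt γ (g t) t := by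
    intro t
    have h2 := ((hf (t • p₀ + p)).hasFDerivAt).comp_hasDerivAt t (hline t)
    have h3 : (fderiv ℝ f (t • p₀ + p)) p₀ = g t := by
      rw [(hf (t • p₀ + p)).hasGradientAt.hasFDerivAt.fderiv]
      exact InnerProductSpace.toDual_apply_apply
    rwa [h3] at h2
  have hderiv_eq : deriv γ = g := funext fun t => (hγ' t).deriv
  have hdg : Tendsto g atTop (nhds L) := hderiv_eq ▸ hd
  have hquot : Tendsto (fun t => (γ t - f p) / t) atTop (nhds L) := by
    apply aux_div _ (fun t => ((hγ' t).differentiableAt).sub_const (f p))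
    have : deriv (fun t => γ t - f p) = deriv γ := by
      funext t; rw [deriv_sub_const]
    rw [this, hderiv_eq]
    exact hdg
  have hB : Tendsto (fun t => |(γ t - f p) / t - g t|) atTop (nhds 0) := by
    have h0 := (hquot.sub hdg).abs
    simpa using h0
  apply squeeze_zero_norm' _ hB
  filter_upwards [eventually_ge_atTop (1:ℝ)] with t ht
  have htpos : (0:ℝ) < t := by linarith
  -- rewrite the expression
  have hexpr : (inner ℝ
          ((1 / ‖(WithLp.equiv 2 (Euc n × ℝ)).symm
              (t • p₀ + p - p, f (t • p₀ + p) - f p)‖) •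
            (WithLp.equiv 2 (Euc n × ℝ)).symm (t • p₀ + p - p, f (t • p₀ + p) - f p))
          ((1 / Real.sqrt (1 + ‖gradient f (t • p₀ + p)‖ ^ 2)) •
            (WithLp.equiv 2 (Euc n × ℝ)).symm (-gradient f (t • p₀ + p), 1)) : ℝ)
      = (1 / ‖v t‖) * ((1 / Real.sqrt (1 + ‖G t‖ ^ 2)) * ((γ t - f p) - t * g t)) := by
    rw [real_inner_smul_left, real_inner_smul_right]
    have hin : (inner ℝ (v t) ((WithLp.equiv 2 (Euc n × ℝ)).symm (-G t, 1)) : ℝ)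
        = (γ t - f p) - t * g t := by
      rw [WithLp.prod_inner_apply]
      simp [hv, hg, add_sub_cancel_right, inner_neg_right, real_inner_smul_left,
        real_inner_comm (G t) p₀]
      have hsum : ∑ x : Fin n, t * p₀ x * G t x = t * ∑ x : Fin n, G t x * p₀ x := by
        rw [Finset.mul_sum]
        exact Finset.sum_congr rfl fun i _ => by ring
      ring
    rw [show ((WithLp.equiv 2 (Euc n × ℝ)).symm (t • p₀ + p - p, f (t • p₀ + p) - f p)) = v t
      from rfl, hin]
  rw [hexpr]
  -- bounds
  have hfst : ‖(v t).fst‖ = t := by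
    simp [hv, add_sub_cancel_right, norm_smul, abs_of_pos htpos, hp₀]
  have hvt : t ≤ ‖v t‖ := by
    have h2 : t ^ 2 ≤ ‖v t‖ ^ 2 := by
      rw [WithLp.prod_norm_sq_eq_of_L2, hfst]
      nlinarith [sq_nonneg ‖(v t).snd‖]
    exact (pow_le_pow_iff_left₀ htpos.le (norm_nonneg _) two_ne_zero).mp h2
  have hsq : (1:ℝ) ≤ Real.sqrt (1 + ‖G t‖ ^ 2) := by
    have h2 : Real.sqrt 1 ≤ Real.sqrt (1 + ‖G t‖ ^ 2) :=
      Real.sqrt_le_sqrt (by nlinarith [sq_nonneg ‖G t‖])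
    simpa using h2
  have hvpos : (0:ℝ) < ‖v t‖ := lt_of_lt_of_le htpos hvt
  have hsqpos : (0:ℝ) < Real.sqrt (1 + ‖G t‖ ^ 2) := lt_of_lt_of_le one_pos hsq
  rw [Real.norm_eq_abs, abs_mul, abs_mul]
  have e1 : |1 / ‖v t‖| ≤ 1 / t := by
    rw [abs_of_pos (by positivity)]
    exact one_div_le_one_div_of_le htpos hvt
  have e2 : |1 / Real.sqrt (1 + ‖G t‖ ^ 2)| ≤ 1 := by
    rw [abs_of_pos (by positivity)]
    rw [div_le_one hsqpos]
    exact hsq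
  calc |1 / ‖v t‖| * (|1 / Real.sqrt (1 + ‖G t‖ ^ 2)| * |(γ t - f p) - t * g t|)
      ≤ (1 / t) * (1 * |(γ t - f p) - t * g t|) := by
        apply mul_le_mul e1 _ (by positivity) (by positivity)
        exact mul_le_mul_of_nonneg_right e2 (abs_nonneg _)
    _ = |(γ t - f p) / t - g t| := by
        rw [one_mul, ← abs_of_pos (show (0:ℝ) < 1/t by positivity), ← abs_mul]
        congr 1
        field_simp
end
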